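/- Let K be an infinite field, n ≥ 2 and m ≥ 1 integers, and p(x_1,...,x_m) a noncommutative polynomial with zero constant term over K of order r with 1 < r < n − 1. If A′ = (a′_{ij}) ∈ T_n(K)^{(r−1)} is such that every entry a′_{s,r+s} on the (r)-th superdiagonal is nonzero (for all 1 ≤ s ≤ n − r), then A′ lies in the image p(T_n(K)). -/

import Mathlib

/-- `A` is upper triangular. -/
def UT {K : Type*} [Field K] {n : ℕ} (A : Matrix (Fin n) (Fin n) K) : Prop :=
  ∀ i j : Fin n, (j : ℕ) < (i : ℕ) → A i j = 0

/-- `p` has zero constant term. -/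
def ZeroConst {K : Type*} [Field K] {m : ℕ} (p : FreeAlgebra K (Fin m)) : Prop :=
  FreeAlgebra.lift K (fun _ : Fin m => (0 : K)) p = 0

/-- `p` has order `r`: it vanishes on all upper triangular `r × r` matrices but not on
all upper triangular `(r+1) × (r+1)` matrices. -/
def HasOrder {K : Type*} [Field K] {m : ℕ} (p : FreeAlgebra K (Fin m)) (r : ℕ) : Prop :=
  (∀ u : Fin m → Matrix (Fin r) (Fin r) K, (∀ i, UT (u i)) →
      FreeAlgebra.lift K u p = 0) ∧
  ∃ u : Fin m → Matrix (Fin (r + 1)) (Fin (r + 1)) K, (∀ i, UT (u i)) ∧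
      FreeAlgebra.lift K u p ≠ 0

namespace Stmt8
open Matrix

variable {K : Type*} [Field K]

theorem ut_iff {n : ℕ} (A : Matrix (Fin n) (Fin n) K) : UT A ↔ A.BlockTriangular id := by
  constructor
  · intro h i j hij
    exact h i j (Fin.lt_def.mp hij)
  · intro h i j hij
    exact h (show id j < id i from Fin.lt_def.mpr hij)

theorem lift_comp {X : Type*} {A B : Type*} [Semiring A] [Algebra K A] [Semiring B]
    [Algebra K B] (g : A →ₐ[K] B) (f : X → A) :
    g.comp (FreeAlgebra.lift K f) = FreeAlgebra.lift K (g ∘ f) := by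
  rw [← FreeAlgebra.lift_unique]
  funext x
  simp

theorem lift_mem {X : Type*} {A : Type*} [Semiring A] [Algebra K A]
    (S : Subalgebra K A) (u : X → A) (h : ∀ k, u k ∈ S) (p : FreeAlgebra K X) :
    FreeAlgebra.lift K u p ∈ S := by
  let u' : X → S := fun k => ⟨u k, h k⟩
  have : S.val.comp (FreeAlgebra.lift K u') = FreeAlgebra.lift K u := by
    rw [lift_comp]; rfl
  have := congrArg (fun g => g p) this
  simp only [AlgHom.comp_apply] at this
  rw [← this]
  exact (FreeAlgebra.lift K u' p).2

/-- The subalgebra of upper triangular matrices. -/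
def utAlg (K : Type*) [Field K] (n : ℕ) : Subalgebra K (Matrix (Fin n) (Fin n) K) where
  carrier := {A | A.BlockTriangular id}
  mul_mem' := fun h1 h2 => h1.mul h2
  add_mem' := fun h1 h2 => h1.add h2
  one_mem' := blockTriangular_one
  algebraMap_mem' := fun r => by
    intro i j hij
    simp only [Matrix.algebraMap_matrix_apply]
    rw [if_neg]; exact fun h => absurd (h ▸ hij) (lt_irrefl _)

theorem lift_ut {m n : ℕ} (u : Fin m → Matrix (Fin n) (Fin n) K) (hu : ∀ k, UT (u k))
    (p : FreeAlgebra K (Fin m)) : UT (FreeAlgebra.lift K u p) := by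
  rw [ut_iff]
  exact lift_mem (utAlg K n) u (fun k => (ut_iff _).1 (hu k)) p

end Stmt8

namespace Stmt8x
open Matrix Finset

variable {K : Type*} [Field K]

/-- Compression of an `n × n` matrix to the interval `[s, s+t)`. -/
def cmp {n : ℕ} (s t : ℕ) (hst : s + t ≤ n) (A : Matrix (Fin n) (Fin n) K) :
    Matrix (Fin t) (Fin t) K :=
  fun a b => A ⟨s + a, by omega⟩ ⟨s + b, by omega⟩

theorem cmp_apply {n : ℕ} (s t : ℕ) (hst : s + t ≤ n) (A : Matrix (Fin n) (Fin n) K)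
    (a b : Fin t) :
    cmp s t hst A a b = A ⟨s + a, by omega⟩ ⟨s + b, by omega⟩ := rfl

theorem cmp_one {n : ℕ} (s t : ℕ) (hst : s + t ≤ n) :
    cmp (K := K) s t hst 1 = 1 := by
  ext a b
  simp only [cmp, Matrix.one_apply]
  by_cases h : a = b
  · subst h; simp
  · rw [if_neg, if_neg h]
    intro hc
    apply h
    have := Fin.mk.injEq (s + (a:ℕ)) _ (s + (b:ℕ)) _ ▸ hc
    apply Fin.ext
    omega

theorem cmp_mul {n : ℕ} (s t : ℕ) (hst : s + t ≤ n) (A B : Matrix (Fin n) (Fin n) K)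
    (hA : A.BlockTriangular id) (hB : B.BlockTriangular id) :
    cmp s t hst (A * B) = cmp s t hst A * cmp s t hst B := by
  ext a b
  simp only [cmp, Matrix.mul_apply]
  set emb : Fin t ↪ Fin n := ⟨fun c => ⟨s + c, by omega⟩, by
    intro c d h
    simp only [Fin.mk.injEq] at h
    exact Fin.ext (by omega)⟩ with hemb
  have h2 : ∑ c : Fin t, A ⟨s + a, by omega⟩ ⟨s + c, by omega⟩ * B ⟨s + c, by omega⟩ ⟨s + b, by omega⟩
      = ∑ l ∈ univ.map emb, A ⟨s + a, by omega⟩ l * B l ⟨s + b, by omega⟩ :=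
    by rw [Finset.sum_map]; rfl
  rw [h2]
  symm
  apply Finset.sum_subset (Finset.subset_univ _)
  intro l _ hl
  have hl' : ¬ (s ≤ (l : ℕ) ∧ (l : ℕ) < s + t) := by
    intro ⟨h1, h2⟩
    apply hl
    simp only [Finset.mem_map, Finset.mem_univ, true_and, hemb, Function.Embedding.coeFn_mk]
    exact ⟨⟨(l : ℕ) - s, by omega⟩, Fin.ext (by show s + ((l : ℕ) - s) = (l : ℕ); omega)⟩
  by_cases hc : (l : ℕ) < s
  · rw [hA (show id l < id ⟨s + a, by omega⟩ from Fin.lt_def.mpr (by simp; omega)), zero_mul]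
  · rw [hB (show id ⟨s + b, by omega⟩ < id l from Fin.lt_def.mpr (by simp; omega)), mul_zero]

theorem cmp_algebraMap {n : ℕ} (s t : ℕ) (hst : s + t ≤ n) (c : K) :
    cmp s t hst (algebraMap K (Matrix (Fin n) (Fin n) K) c)
      = algebraMap K (Matrix (Fin t) (Fin t) K) c := by
  ext a b
  simp only [cmp, Matrix.algebraMap_matrix_apply]
  by_cases h : a = b
  · subst h; simp
  · rw [if_neg, if_neg h]
    intro hc
    exact h (Fin.ext (by
      have := Fin.mk.injEq (s + (a:ℕ)) _ (s + (b:ℕ)) _ ▸ hc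
      omega))

theorem cmp_bt {n : ℕ} (s t : ℕ) (hst : s + t ≤ n) (A : Matrix (Fin n) (Fin n) K)
    (hA : A.BlockTriangular id) : (cmp s t hst A).BlockTriangular id := by
  intro a b hab
  exact hA (show id _ < id _ from Fin.lt_def.mpr (by
    simpa using Nat.add_lt_add_left (Fin.lt_def.mp hab) s))

/-- pairs (A, cmp A) with A upper triangular form a subalgebra. -/
def pairAlg (n s t : ℕ) (hst : s + t ≤ n) :
    Subalgebra K (Matrix (Fin n) (Fin n) K × Matrix (Fin t) (Fin t) K) where
  carrier := {x | x.1.BlockTriangular id ∧ x.2 = cmp s t hst x.1}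
  mul_mem' := by
    rintro ⟨A, B⟩ ⟨A', B'⟩ ⟨hA, hB⟩ ⟨hA', hB'⟩
    dsimp only at hA hB hA' hB' ⊢
    refine ⟨hA.mul hA', ?_⟩
    rw [hB, hB']
    exact (cmp_mul s t hst A A' hA hA').symm
  add_mem' := by
    rintro ⟨A, B⟩ ⟨A', B'⟩ ⟨hA, hB⟩ ⟨hA', hB'⟩
    dsimp only at hA hB hA' hB' ⊢
    refine ⟨hA.add hA', ?_⟩
    rw [hB, hB']
    ext a b
    simp [cmp]
  algebraMap_mem' := fun c => by
    refine ⟨?_, ?_⟩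
    · intro i j hij
      change (algebraMap K (Matrix (Fin n) (Fin n) K) c) i j = 0
      rw [Matrix.algebraMap_matrix_apply, if_neg]
      exact fun h => absurd (h ▸ hij) (lt_irrefl _)
    · change algebraMap K (Matrix (Fin t) (Fin t) K) c = cmp s t hst (algebraMap K _ c)
      exact (cmp_algebraMap s t hst c).symm

theorem cmp_lift {m n : ℕ} (s t : ℕ) (hst : s + t ≤ n)
    (u : Fin m → Matrix (Fin n) (Fin n) K) (hu : ∀ k, (u k).BlockTriangular id)
    (p : FreeAlgebra K (Fin m)) :
    cmp s t hst (FreeAlgebra.lift K u p)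
      = FreeAlgebra.lift K (fun k => cmp s t hst (u k)) p := by
  have hm := Stmt8.lift_mem (pairAlg (K := K) n s t hst)
    (fun k => (u k, cmp s t hst (u k))) (fun k => ⟨hu k, rfl⟩) p
  have h1 : (AlgHom.fst K (Matrix (Fin n) (Fin n) K) (Matrix (Fin t) (Fin t) K)).comp
      (FreeAlgebra.lift K (fun k => (u k, cmp s t hst (u k)))) = FreeAlgebra.lift K u :=
    Stmt8.lift_comp _ _
  have h2 : (AlgHom.snd K (Matrix (Fin n) (Fin n) K) (Matrix (Fin t) (Fin t) K)).comp
      (FreeAlgebra.lift K (fun k => (u k, cmp s t hst (u k)))) =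
      FreeAlgebra.lift K (fun k => cmp s t hst (u k)) := Stmt8.lift_comp _ _
  have e1 := congrArg (fun g => g p) h1
  have e2 := congrArg (fun g => g p) h2
  simp only [AlgHom.comp_apply] at e1 e2
  change Prod.fst _ = _ at e1
  change Prod.snd _ = _ at e2
  rw [← e1, ← e2]
  exact hm.2.symm

theorem lift_low_zero {m n r : ℕ} (hrn : r ≤ n) (p : FreeAlgebra K (Fin m))
    (hvan : ∀ v : Fin m → Matrix (Fin r) (Fin r) K,
      (∀ k, (v k).BlockTriangular id) → FreeAlgebra.lift K v p = 0)
    (u : Fin m → Matrix (Fin n) (Fin n) K) (hu : ∀ k, (u k).BlockTriangular id) :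
    ∀ i j : Fin n, (j : ℕ) < (i : ℕ) + r → FreeAlgebra.lift K u p i j = 0 := by
  intro i j hij
  by_cases hji : (j : ℕ) < (i : ℕ)
  · exact Stmt8.lift_mem (Stmt8.utAlg K n) u hu p (show id j < id i from Fin.lt_def.mpr hji)
  · push_neg at hji
    have hi : (i : ℕ) < n := i.2
    have hj : (j : ℕ) < n := j.2
    set s := min (i : ℕ) (n - r) with hs
    have hsr : s + r ≤ n := by omega
    have key := cmp_lift s r hsr u hu p
    have e : cmp s r hsr (FreeAlgebra.lift K u p) ⟨(i : ℕ) - s, by omega⟩ ⟨(j : ℕ) - s, by omega⟩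
        = FreeAlgebra.lift K (fun k => cmp s r hsr (u k)) p ⟨(i : ℕ) - s, by omega⟩
          ⟨(j : ℕ) - s, by omega⟩ := by rw [key]
    rw [hvan (fun k => cmp s r hsr (u k)) (fun k => cmp_bt s r hsr (u k) (hu k))] at e
    simp only [Matrix.zero_apply] at e
    have hi' : i = ⟨s + ((i : ℕ) - s), by omega⟩ := Fin.ext (show (i : ℕ) = s + ((i : ℕ) - s) by omega)
    have hj' : j = ⟨s + ((j : ℕ) - s), by omega⟩ := Fin.ext (show (j : ℕ) = s + ((j : ℕ) - s) by omega)
    rw [cmp_apply, ← hi', ← hj'] at e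
    exact e

theorem witness_corner {m r : ℕ} (p : FreeAlgebra K (Fin m))
    (hvan : ∀ v : Fin m → Matrix (Fin r) (Fin r) K,
      (∀ k, (v k).BlockTriangular id) → FreeAlgebra.lift K v p = 0)
    (u : Fin m → Matrix (Fin (r + 1)) (Fin (r + 1)) K)
    (hu : ∀ k, (u k).BlockTriangular id)
    (hne : FreeAlgebra.lift K u p ≠ 0) :
    FreeAlgebra.lift K u p ⟨0, by omega⟩ ⟨r, by omega⟩ ≠ 0 := by
  intro h0
  apply hne
  ext a b
  simp only [Matrix.zero_apply]
  by_cases hab : (b : ℕ) < (a : ℕ) + r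
  · exact lift_low_zero (by omega) p hvan u hu a b hab
  · have ha : a = ⟨0, by omega⟩ := Fin.ext (show (a : ℕ) = 0 by have := a.2; have := b.2; omega)
    have hb : b = ⟨r, by omega⟩ := Fin.ext (show (b : ℕ) = r by have := a.2; have := b.2; omega)
    rw [ha, hb]
    exact h0

theorem exists_good_w {m n r : ℕ} [Infinite K] (hrn : r + 1 ≤ n) (p : FreeAlgebra K (Fin m))
    (hvan : ∀ v : Fin m → Matrix (Fin r) (Fin r) K,
      (∀ k, (v k).BlockTriangular id) → FreeAlgebra.lift K v p = 0)
    (u : Fin m → Matrix (Fin (r + 1)) (Fin (r + 1)) K)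
    (hu : ∀ k, (u k).BlockTriangular id)
    (hne : FreeAlgebra.lift K u p ≠ 0) :
    ∃ w : Fin m → Matrix (Fin n) (Fin n) K, (∀ k, (w k).BlockTriangular id) ∧
      ∀ i j : Fin n, (j : ℕ) = (i : ℕ) + r → FreeAlgebra.lift K w p i j ≠ 0 := by
  classical
  have hcor := witness_corner p hvan u hu hne
  set σ := Fin m × Fin n × Fin n
  set R := MvPolynomial σ K with hR
  set G : Fin m → Matrix (Fin n) (Fin n) R :=
    fun k => Matrix.of (fun i j => if (i : ℕ) ≤ (j : ℕ) then MvPolynomial.X (k, i, j) else 0)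
    with hGdef
  have hG : ∀ k, (G k).BlockTriangular id := by
    intro k i j hij
    have hij' : (j : ℕ) < (i : ℕ) := hij
    simp only [hGdef, Matrix.of_apply, σ]
    rw [if_neg]
    omega
  set P : Matrix (Fin n) (Fin n) R := FreeAlgebra.lift K G p with hP
  -- evaluation naturality
  have heval : ∀ v : σ → K, ∀ i j : Fin n,
      MvPolynomial.aeval v (P i j)
        = FreeAlgebra.lift K (fun k => (G k).map (MvPolynomial.aeval v)) p i j := by
    intro v i j
    have hcomp := Stmt8.lift_comp ((MvPolynomial.aeval v : R →ₐ[K] K).mapMatrix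
      (m := Fin n)) G
    have := congrArg (fun g => g p) hcomp
    simp only [AlgHom.comp_apply] at this
    calc MvPolynomial.aeval v (P i j)
        = ((MvPolynomial.aeval v : R →ₐ[K] K).mapMatrix P) i j := rfl
      _ = _ := by
          rw [hP, this]
          rfl
  -- each superdiagonal entry of P is a nonzero polynomial
  have hqne : ∀ i j : Fin n, (j : ℕ) = (i : ℕ) + r → P i j ≠ 0 := by
    intro i j hij h0
    set s := (i : ℕ)
    have hsn : s + (r + 1) ≤ n := by have := j.2; omega
    set v : σ → K := fun x =>
      if h : s ≤ (x.2.1 : ℕ) ∧ (x.2.1 : ℕ) ≤ (x.2.2 : ℕ) ∧ (x.2.2 : ℕ) < s + (r + 1) then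
        u x.1 ⟨(x.2.1 : ℕ) - s, by omega⟩ ⟨(x.2.2 : ℕ) - s, by omega⟩ else 0
      with hv
    set w : Fin m → Matrix (Fin n) (Fin n) K :=
      fun k => (G k).map (MvPolynomial.aeval v) with hw
    have hwut : ∀ k, (w k).BlockTriangular id := by
      intro k a b hab
      have hab' : (b : ℕ) < (a : ℕ) := hab
      simp only [hw, Matrix.map_apply, hGdef, Matrix.of_apply]
      rw [if_neg (by omega), map_zero]
    have hcmp : ∀ k, cmp s (r + 1) hsn (w k) = u k := by
      intro k
      ext a b
      rw [cmp_apply]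
      simp only [hw, Matrix.map_apply, hGdef, Matrix.of_apply]
      by_cases hab : (a : ℕ) ≤ (b : ℕ)
      · rw [if_pos (by simpa using hab)]
        simp only [MvPolynomial.aeval_X, hv]
        rw [dif_pos (by simp; omega)]
        congr 1 <;> exact Fin.ext (by simp)
      · rw [if_neg (by simpa using hab), map_zero]
        exact (hu k (show id b < id a from Fin.lt_def.mpr (show (b : ℕ) < (a : ℕ) by omega))).symm
    have hev : MvPolynomial.aeval v (P i j) ≠ 0 := by
      rw [heval v i j]
      have hkey := cmp_lift s (r + 1) hsn w hwut p
      have e : cmp s (r + 1) hsn (FreeAlgebra.lift K w p) ⟨0, by omega⟩ ⟨r, by omega⟩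
          = FreeAlgebra.lift K (fun k => cmp s (r + 1) hsn (w k)) p ⟨0, by omega⟩ ⟨r, by omega⟩ := by
        rw [hkey]
      rw [cmp_apply] at e
      have hi' : (⟨s + 0, by omega⟩ : Fin n) = i := Fin.ext (by simp; rfl)
      have hj' : (⟨s + r, by omega⟩ : Fin n) = j := Fin.ext (by simp [hij])
      rw [hi', hj'] at e
      rw [show (fun k => cmp s (r+1) hsn (w k)) = u from funext hcmp] at e
      rw [e]
      exact hcor
    rw [h0, map_zero] at hev
    exact hev rfl
  -- the product of superdiagonal entries is nonzero, hence has a nonzero evaluation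
  have hq : ∀ s : ℕ, (hs : s < n - r) → P ⟨s, by omega⟩ ⟨s + r, by omega⟩ ≠ 0 := by
    intro s hs
    exact hqne ⟨s, by omega⟩ ⟨s + r, by omega⟩ rfl
  set Q : R := ∏ s ∈ Finset.range (n - r),
    if h : s < n - r then P ⟨s, by omega⟩ ⟨s + r, by omega⟩ else 1 with hQ
  have hQne : Q ≠ 0 := by
    apply Finset.prod_ne_zero_iff.2
    intro s hs
    rw [dif_pos (Finset.mem_range.1 hs)]
    exact hq s (Finset.mem_range.1 hs)
  have hex : ∃ v : σ → K, MvPolynomial.eval v Q ≠ 0 := by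
    by_contra hc
    push_neg at hc
    exact hQne (MvPolynomial.funext (fun v => by rw [hc v, map_zero]))
  obtain ⟨v, hvQ⟩ := hex
  refine ⟨fun k => (G k).map (MvPolynomial.aeval v), ?_, ?_⟩
  · intro k a b hab
    have hab' : (b : ℕ) < (a : ℕ) := hab
    simp only [Matrix.map_apply, hGdef, Matrix.of_apply]
    rw [if_neg (by omega), map_zero]
  · intro i j hij h0
    apply hvQ
    rw [hQ]
    rw [map_prod]
    apply Finset.prod_eq_zero (Finset.mem_range.2 (show (i : ℕ) < n - r by have := j.2; omega))
    rw [dif_pos (show (i : ℕ) < n - r by have := j.2; omega)]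
    have hi' : (⟨(i : ℕ), by omega⟩ : Fin n) = i := Fin.ext rfl
    have hj' : (⟨(i : ℕ) + r, by omega⟩ : Fin n) = j := Fin.ext (show (i : ℕ) + r = (j : ℕ) by omega)
    rw [hi', hj']
    have : MvPolynomial.eval v (P i j) = MvPolynomial.aeval v (P i j) := by
      rw [← MvPolynomial.coe_aeval_eq_eval]
      rfl
    rw [this, heval v i j, h0]

/-- Conjugation by an invertible element as an algebra homomorphism. -/
def conjHom {A : Type*} [Ring A] [Algebra K A] (U V : A) (hUV : U * V = 1)
    (hVU : V * U = 1) : A →ₐ[K] A where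
  toFun := fun X => U * X * V
  map_one' := by show U * 1 * V = 1; rw [mul_one, hUV]
  map_mul' := fun X Y => by
    show U * (X * Y) * V = U * X * V * (U * Y * V)
    have h : U * X * V * (U * Y * V) = U * (X * (V * U * Y)) * V := by noncomm_ring
    rw [h, hVU, one_mul, ← mul_assoc]
  map_zero' := by show U * 0 * V = 0; rw [mul_zero, zero_mul]

  map_add' := fun X Y => by show U * (X + Y) * V = U * X * V + U * Y * V; rw [mul_add, add_mul]
  commutes' := fun c => by
    show U * algebraMap K _ c * V = _
    rw [Algebra.algebraMap_eq_smul_one, mul_smul_comm, mul_one, smul_mul_assoc, hUV]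

theorem lift_conj {m : ℕ} {A : Type*} [Ring A] [Algebra K A] (U V : A) (hUV : U * V = 1)
    (hVU : V * U = 1) (u : Fin m → A) (p : FreeAlgebra K (Fin m)) :
    FreeAlgebra.lift K (fun k => U * u k * V) p = U * FreeAlgebra.lift K u p * V := by
  have h := Stmt8.lift_comp (conjHom (K := K) U V hUV hVU) u
  have := congrArg (fun g => g p) h
  simp only [AlgHom.comp_apply] at this
  exact this.symm

/-- The recursively defined diagonal scaling sequence. -/
def dseq (c a : ℕ → K) (r' : ℕ) : ℕ → K := fun i =>
  if i < r' + 1 then 1 else dseq c a r' (i - (r' + 1)) * c (i - (r' + 1)) / a (i - (r' + 1))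
termination_by i => i
decreasing_by omega

theorem dseq_ne_zero (c a : ℕ → K) (r' : ℕ) (hc : ∀ j, c j ≠ 0) (ha : ∀ j, a j ≠ 0) :
    ∀ i, dseq c a r' i ≠ 0 := by
  intro i
  induction i using Nat.strong_induction_on with
  | _ i ih =>
    rw [dseq]
    split
    · exact one_ne_zero
    · exact div_ne_zero (mul_ne_zero (ih _ (by omega)) (hc _)) (ha _)

theorem dseq_rel (c a : ℕ → K) (r' : ℕ) (i : ℕ) (h : ¬ i < r' + 1) :
    dseq c a r' i = dseq c a r' (i - (r' + 1)) * c (i - (r' + 1)) / a (i - (r' + 1)) := by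
  rw [dseq]
  exact if_neg h

theorem exists_matching_superdiag {m n r : ℕ} (hr : 1 ≤ r) (p : FreeAlgebra K (Fin m))
    (w : Fin m → Matrix (Fin n) (Fin n) K) (hw : ∀ k, (w k).BlockTriangular id)
    (hwne : ∀ i j : Fin n, (j : ℕ) = (i : ℕ) + r → FreeAlgebra.lift K w p i j ≠ 0)
    (A' : Matrix (Fin n) (Fin n) K)
    (hA2 : ∀ i j : Fin n, (j : ℕ) = (i : ℕ) + r → A' i j ≠ 0) :
    ∃ w' : Fin m → Matrix (Fin n) (Fin n) K, (∀ k, (w' k).BlockTriangular id) ∧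
      ∀ i j : Fin n, (j : ℕ) = (i : ℕ) + r → FreeAlgebra.lift K w' p i j = A' i j := by
  classical
  set B : Matrix (Fin n) (Fin n) K := FreeAlgebra.lift K w p with hB
  set c : ℕ → K := fun i => if h : i + r < n then B ⟨i, by omega⟩ ⟨i + r, h⟩ else 1 with hcdef
  set a : ℕ → K := fun i => if h : i + r < n then A' ⟨i, by omega⟩ ⟨i + r, h⟩ else 1 with hadef
  have hc : ∀ j, c j ≠ 0 := by
    intro j
    rw [hcdef]
    dsimp only
    split
    · exact hwne _ _ rfl
    · exact one_ne_zero
  have ha : ∀ j, a j ≠ 0 := by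
    intro j
    rw [hadef]
    dsimp only
    split
    · exact hA2 _ _ rfl
    · exact one_ne_zero
  set d : ℕ → K := dseq c a (r - 1) with hddef
  have hd : ∀ i, d i ≠ 0 := dseq_ne_zero c a (r - 1) hc ha
  set D : Matrix (Fin n) (Fin n) K := Matrix.diagonal (fun i : Fin n => d i) with hD
  set Dinv : Matrix (Fin n) (Fin n) K := Matrix.diagonal (fun i : Fin n => (d i)⁻¹) with hDi
  have hUV : D * Dinv = 1 := by
    rw [hD, hDi, Matrix.diagonal_mul_diagonal,
      show (fun i : Fin n => d i * (d i)⁻¹) = fun _ => (1 : K) from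
        funext fun i => mul_inv_cancel₀ (hd _), Matrix.diagonal_one]
  have hVU : Dinv * D = 1 := by
    rw [hD, hDi, Matrix.diagonal_mul_diagonal,
      show (fun i : Fin n => (d i)⁻¹ * d i) = fun _ => (1 : K) from
        funext fun i => inv_mul_cancel₀ (hd _), Matrix.diagonal_one]
  refine ⟨fun k => D * w k * Dinv, ?_, ?_⟩
  · intro k
    exact ((Matrix.blockTriangular_diagonal _).mul (hw k)).mul
      (Matrix.blockTriangular_diagonal _)
  · intro i j hij
    rw [lift_conj D Dinv hUV hVU w p, ← hB]
    have hentry : (D * B * Dinv) i j = d i * B i j * (d (j : ℕ))⁻¹ := by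
      rw [Matrix.mul_diagonal, Matrix.diagonal_mul]
    rw [hentry]
    have hin : (i : ℕ) + r < n := by have := j.2; omega
    have hci : c (i : ℕ) = B i j := by
      rw [hcdef]
      dsimp only
      rw [dif_pos hin]
      congr 1
      exact Fin.ext hij.symm
    have hai : a (i : ℕ) = A' i j := by
      rw [hadef]
      dsimp only
      rw [dif_pos hin]
      congr 1
      exact Fin.ext hij.symm
    have hrel := dseq_rel c a (r - 1) ((i : ℕ) + r) (by omega)
    have hidx : (i : ℕ) + r - (r - 1 + 1) = (i : ℕ) := by omega
    rw [hidx] at hrel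
    rw [hij, ← hddef] at *
    rw [show d ((i : ℕ) + r) = d (i : ℕ) * c (i : ℕ) / a (i : ℕ) from hrel, hci, hai]
    have h1 := hd (i : ℕ)
    have h2 : B i j ≠ 0 := hci ▸ hc (i : ℕ)
    have h3 : A' i j ≠ 0 := hai ▸ ha (i : ℕ)
    field_simp

end Stmt8x



namespace Stmt8y
variable {K : Type*} [Field K]

/-- Entries of the strictly upper triangular correction matrix, as a function of
(level, row). -/
def corr (n r : ℕ) (Af Bf : ℕ → ℕ → K) : ℕ → ℕ → K := fun d i =>
  if hd : 0 < d ∧ 0 < r ∧ i + d + r < n then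
    (Af i (i + d + r) - Bf i (i + d + r)
      - ∑ e ∈ (Finset.Ioo 0 d).attach, corr n r Af Bf (e : ℕ) i * Bf (i + e) (i + d + r)
      + ∑ e ∈ (Finset.range d).attach,
          Af i (i + r + e) * corr n r Af Bf (d - (e : ℕ)) (i + r + e))
    / Af (i + d) (i + d + r)
  else 0
termination_by d i => (d, n - i)
decreasing_by
  · have he := e.2
    simp only [Prod.lex_iff, Finset.mem_Ioo] at he ⊢
    omega
  · have he := e.2
    simp only [Prod.lex_iff, Finset.mem_range] at he ⊢
    omega

theorem corr_zero (n r : ℕ) (Af Bf : ℕ → ℕ → K) (i : ℕ) : corr n r Af Bf 0 i = 0 := by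
  rw [corr]
  simp

theorem corr_eq (n r : ℕ) (Af Bf : ℕ → ℕ → K) (d i : ℕ)
    (hd : 0 < d ∧ 0 < r ∧ i + d + r < n) :
    corr n r Af Bf d i =
      (Af i (i + d + r) - Bf i (i + d + r)
        - ∑ e ∈ Finset.Ioo 0 d, corr n r Af Bf e i * Bf (i + e) (i + d + r)
        + ∑ e ∈ Finset.range d, Af i (i + r + e) * corr n r Af Bf (d - e) (i + r + e))
      / Af (i + d) (i + d + r) := by
  rw [corr, dif_pos hd, Finset.sum_attach (Finset.Ioo 0 d)
    (fun e => corr n r Af Bf e i * Bf (i + e) (i + d + r)), Finset.sum_attach (Finset.range d)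
    (fun e => Af i (i + r + e) * corr n r Af Bf (d - e) (i + r + e))]

open Finset

theorem unipotent_fix {n r : ℕ} (hr : 0 < r) (B A' : Matrix (Fin n) (Fin n) K)
    (hB : ∀ i j : Fin n, (j : ℕ) < (i : ℕ) + r → B i j = 0)
    (hA : ∀ i j : Fin n, (j : ℕ) < (i : ℕ) + r → A' i j = 0)
    (hBA : ∀ i j : Fin n, (j : ℕ) = (i : ℕ) + r → B i j = A' i j)
    (hAne : ∀ i j : Fin n, (j : ℕ) = (i : ℕ) + r → A' i j ≠ 0) :
    ∃ U V : Matrix (Fin n) (Fin n) K, U * V = 1 ∧ V * U = 1 ∧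
      U.BlockTriangular id ∧ V.BlockTriangular id ∧ U * B = A' * U := by
  classical
  set Af : ℕ → ℕ → K :=
    fun i j => if h : i < n ∧ j < n then A' ⟨i, h.1⟩ ⟨j, h.2⟩ else 0 with hAfdef
  set Bf : ℕ → ℕ → K :=
    fun i j => if h : i < n ∧ j < n then B ⟨i, h.1⟩ ⟨j, h.2⟩ else 0 with hBfdef
  have hAfap : ∀ i j : Fin n, Af (i : ℕ) (j : ℕ) = A' i j := fun i j => dif_pos ⟨i.2, j.2⟩
  have hBfap : ∀ i j : Fin n, Bf (i : ℕ) (j : ℕ) = B i j := fun i j => dif_pos ⟨i.2, j.2⟩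
  have hAf0 : ∀ i j : ℕ, j < i + r → Af i j = 0 := by
    intro i j hij
    rw [hAfdef]
    dsimp only
    split
    · exact hA _ _ hij
    · rfl
  have hBf0 : ∀ i j : ℕ, j < i + r → Bf i j = 0 := by
    intro i j hij
    rw [hBfdef]
    dsimp only
    split
    · exact hB _ _ hij
    · rfl
  have hBfhi : ∀ i j : ℕ, n ≤ j → Bf i j = 0 := by
    intro i j hij
    rw [hBfdef]
    dsimp only
    rw [dif_neg (by omega)]
  have hBAf : ∀ i j : ℕ, j = i + r → j < n → Bf i j = Af i j := by
    intro i j hij hjn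
    rw [hBfdef, hAfdef]
    dsimp only
    rw [dif_pos ⟨by omega, hjn⟩, dif_pos ⟨by omega, hjn⟩]
    exact hBA _ _ hij
  have hAfne : ∀ i j : ℕ, j = i + r → j < n → Af i j ≠ 0 := by
    intro i j hij hjn
    rw [hAfdef]
    dsimp only
    rw [dif_pos ⟨by omega, hjn⟩]
    exact hAne _ _ hij
  set N : Matrix (Fin n) (Fin n) K :=
    Matrix.of (fun i j => corr n r Af Bf ((j : ℕ) - (i : ℕ)) (i : ℕ)) with hNdef
  have hNap : ∀ i j : Fin n, N i j = corr n r Af Bf ((j : ℕ) - (i : ℕ)) (i : ℕ) := fun _ _ => rfl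
  have hNBT : N.BlockTriangular id := by
    intro i j hij
    have hij' : (j : ℕ) < (i : ℕ) := hij
    rw [hNap, show (j : ℕ) - (i : ℕ) = 0 by omega, corr_zero]
  have hUBT : (1 + N).BlockTriangular id := Matrix.blockTriangular_one.add hNBT
  have main : (1 + N) * B = A' * (1 + N) := by
    ext i j
    rw [Matrix.add_mul, Matrix.one_mul, Matrix.mul_add, Matrix.mul_one, Matrix.add_apply,
      Matrix.add_apply, Matrix.mul_apply, Matrix.mul_apply]
    have hNB : ∑ l : Fin n, N i l * B l j
        = ∑ l ∈ Finset.range n, corr n r Af Bf (l - (i : ℕ)) (i : ℕ) * Bf l (j : ℕ) := by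
      rw [← Fin.sum_univ_eq_sum_range
        (fun l => corr n r Af Bf (l - (i : ℕ)) (i : ℕ) * Bf l (j : ℕ)) n]
      exact Finset.sum_congr rfl fun l _ => by rw [hNap, hBfap]
    have hAN : ∑ l : Fin n, A' i l * N l j
        = ∑ l ∈ Finset.range n, Af (i : ℕ) l * corr n r Af Bf ((j : ℕ) - l) l := by
      rw [← Fin.sum_univ_eq_sum_range
        (fun l => Af (i : ℕ) l * corr n r Af Bf ((j : ℕ) - l) l) n]
      exact Finset.sum_congr rfl fun l _ => by rw [hNap, hAfap]
    rw [hNB, hAN]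
    by_cases hcase : (j : ℕ) ≤ (i : ℕ) + r
    · -- low levels: both sums vanish and B, A' agree
      have hBij : B i j = A' i j := by
        rcases lt_or_eq_of_le hcase with h | h
        · rw [hB i j h, hA i j h]
        · exact hBA i j h
      have hz1 : ∑ l ∈ Finset.range n, corr n r Af Bf (l - (i : ℕ)) (i : ℕ) * Bf l (j : ℕ) = 0 := by
        apply Finset.sum_eq_zero
        intro l hl
        by_cases hlj : (j : ℕ) < l + r
        · rw [hBf0 _ _ hlj, mul_zero]
        · rw [show l - (i : ℕ) = 0 by omega, corr_zero, zero_mul]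
      have hz2 : ∑ l ∈ Finset.range n, Af (i : ℕ) l * corr n r Af Bf ((j : ℕ) - l) l = 0 := by
        apply Finset.sum_eq_zero
        intro l hl
        by_cases hli : l < (i : ℕ) + r
        · rw [hAf0 _ _ hli, zero_mul]
        · rw [show (j : ℕ) - l = 0 by omega, corr_zero, mul_zero]
      rw [hBij, hz1, hz2]
    · -- main case
      push_neg at hcase
      set d : ℕ := (j : ℕ) - (i : ℕ) - r with hd
      have hd1 : 0 < d := by omega
      have hjn : (j : ℕ) < n := j.2
      have hidx : (i : ℕ) + d + r = (j : ℕ) := by omega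
      have key := corr_eq n r Af Bf d (i : ℕ) ⟨hd1, hr, by omega⟩
      rw [hidx] at key
      -- first sum
      have hS1 : ∑ l ∈ Finset.range n, corr n r Af Bf (l - (i : ℕ)) (i : ℕ) * Bf l (j : ℕ)
          = (∑ e ∈ Finset.Ioo 0 d, corr n r Af Bf e (i : ℕ) * Bf ((i : ℕ) + e) (j : ℕ))
            + corr n r Af Bf d (i : ℕ) * Bf ((i : ℕ) + d) (j : ℕ) := by
        rw [← Finset.sum_subset (show Finset.Ioc (i : ℕ) ((i : ℕ) + d) ⊆ Finset.range n by
            intro l hl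
            simp only [Finset.mem_Ioc] at hl
            simp only [Finset.mem_range]
            omega)]
        · have hIoc : Finset.Ioc (i : ℕ) ((i : ℕ) + d)
              = (Finset.Ioc 0 d).map (addLeftEmbedding (i : ℕ)) := by
            rw [Finset.map_add_left_Ioc, add_zero]
          rw [hIoc, Finset.sum_map, ← Finset.Ioo_insert_right hd1,
            Finset.sum_insert (by simp)]
          simp only [addLeftEmbedding_apply]
          rw [show (i : ℕ) + d - (i : ℕ) = d by omega]
          rw [add_comm]
          congr 1
          apply Finset.sum_congr rfl
          intro e he
          simp only [Finset.mem_Ioo] at he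
          rw [show (i : ℕ) + e - (i : ℕ) = e by omega]
        · intro l hl hl'
          simp only [Finset.mem_range] at hl
          simp only [Finset.mem_Ioc] at hl'
          by_cases hli : l ≤ (i : ℕ)
          · rw [show l - (i : ℕ) = 0 by omega, corr_zero, zero_mul]
          · rw [hBf0 _ _ (by omega), mul_zero]
      -- second sum
      have hS2 : ∑ l ∈ Finset.range n, Af (i : ℕ) l * corr n r Af Bf ((j : ℕ) - l) l
          = ∑ e ∈ Finset.range d, Af (i : ℕ) ((i : ℕ) + r + e)
              * corr n r Af Bf (d - e) ((i : ℕ) + r + e) := by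
        rw [← Finset.sum_subset (show Finset.Ico ((i : ℕ) + r) (j : ℕ) ⊆ Finset.range n by
            intro l hl
            simp only [Finset.mem_Ico] at hl
            simp only [Finset.mem_range]
            omega)]
        · have hIco : Finset.Ico ((i : ℕ) + r) (j : ℕ)
              = (Finset.Ico 0 d).map (addLeftEmbedding ((i : ℕ) + r)) := by
            rw [Finset.map_add_left_Ico, add_zero]
            congr 1
            omega
          rw [hIco, Finset.sum_map, ← Finset.range_eq_Ico]
          apply Finset.sum_congr rfl
          intro e he
          simp only [Finset.mem_range] at he
          simp only [addLeftEmbedding_apply]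
          rw [show (j : ℕ) - ((i : ℕ) + r + e) = d - e by omega]
        · intro l hl hl'
          simp only [Finset.mem_range] at hl
          simp only [Finset.mem_Ico] at hl'
          by_cases hli : l < (i : ℕ) + r
          · rw [hAf0 _ _ hli, zero_mul]
          · rw [show (j : ℕ) - l = 0 by omega, corr_zero, mul_zero]
      rw [hS1, hS2]
      have hBAd : Bf ((i : ℕ) + d) (j : ℕ) = Af ((i : ℕ) + d) (j : ℕ) :=
        hBAf _ _ (by omega) hjn
      have hAdne : Af ((i : ℕ) + d) (j : ℕ) ≠ 0 := hAfne _ _ (by omega) hjn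
      have key' : corr n r Af Bf d (i : ℕ) * Af ((i : ℕ) + d) (j : ℕ)
          = Af (i : ℕ) (j : ℕ) - Bf (i : ℕ) (j : ℕ)
            - (∑ e ∈ Finset.Ioo 0 d, corr n r Af Bf e (i : ℕ) * Bf ((i : ℕ) + e) (j : ℕ))
            + ∑ e ∈ Finset.range d, Af (i : ℕ) ((i : ℕ) + r + e)
                * corr n r Af Bf (d - e) ((i : ℕ) + r + e) := by
        rw [key, div_mul_cancel₀ _ hAdne]
      rw [hBAd, ← hAfap i j, ← hBfap i j]
      linear_combination key'
  -- invertibility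
  have hdiag : ∀ i : Fin n, (1 + N) i i = 1 := by
    intro i
    rw [Matrix.add_apply, Matrix.one_apply_eq, hNap, Nat.sub_self, corr_zero, add_zero]
  have hdet : (1 + N).det = 1 := by
    rw [Matrix.det_of_upperTriangular hUBT]
    exact Finset.prod_eq_one fun i _ => hdiag i
  have hunit : IsUnit (1 + N).det := by rw [hdet]; exact isUnit_one
  haveI := Matrix.invertibleOfIsUnitDet _ hunit
  exact ⟨1 + N, (1 + N)⁻¹, Matrix.mul_nonsing_inv _ hunit, Matrix.nonsing_inv_mul _ hunit,
    hUBT, Matrix.blockTriangular_inv_of_blockTriangular hUBT, main⟩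

end Stmt8y



theorem stmt_8 {K : Type*} [Field K] [Infinite K] (m n r : ℕ) (hm : 1 ≤ m) (hn : 2 ≤ n)
    (p : FreeAlgebra K (Fin m)) (hp : ZeroConst p)
    (hord : HasOrder p r) (hr1 : 1 < r) (hr2 : r + 1 < n)
    (A' : Matrix (Fin n) (Fin n) K)
    (hA1 : ∀ i j : Fin n, (j : ℕ) < (i : ℕ) + r → A' i j = 0)
    (hA2 : ∀ i j : Fin n, (j : ℕ) = (i : ℕ) + r → A' i j ≠ 0) :
    ∃ u : Fin m → Matrix (Fin n) (Fin n) K, (∀ i, UT (u i)) ∧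
      FreeAlgebra.lift K u p = A' := by
  classical
  obtain ⟨hvan0, u0, hu0, hne0⟩ := hord
  have hvan : ∀ v : Fin m → Matrix (Fin r) (Fin r) K,
      (∀ k, (v k).BlockTriangular id) → FreeAlgebra.lift K v p = 0 :=
    fun v hv => hvan0 v (fun k => (Stmt8.ut_iff _).2 (hv k))
  have hu0' : ∀ k, (u0 k).BlockTriangular id := fun k => (Stmt8.ut_iff _).1 (hu0 k)
  obtain ⟨w, hwBT, hwne⟩ :=
    Stmt8x.exists_good_w (n := n) (by omega) p hvan u0 hu0' hne0
  obtain ⟨w', hw'BT, hmatch⟩ :=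
    Stmt8x.exists_matching_superdiag (by omega) p w hwBT hwne A' hA2
  set B : Matrix (Fin n) (Fin n) K := FreeAlgebra.lift K w' p with hB
  have hBlow : ∀ i j : Fin n, (j : ℕ) < (i : ℕ) + r → B i j = 0 :=
    Stmt8x.lift_low_zero (by omega) p hvan w' hw'BT
  obtain ⟨U, V, hUV, hVU, hUBT, hVBT, hmain⟩ :=
    Stmt8y.unipotent_fix (by omega) B A' hBlow hA1 (fun i j hij => hmatch i j hij) hA2
  refine ⟨fun k => U * w' k * V, ?_, ?_⟩
  · intro k
    exact (Stmt8.ut_iff _).2 ((hUBT.mul (hw'BT k)).mul hVBT)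
  · rw [Stmt8x.lift_conj U V hUV hVU w' p, ← hB, hmain, Matrix.mul_assoc, hUV, Matrix.mul_one]
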